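/- Let h : ℝⁿ → ℝ ∪ {∞} be a proper polyhedral convex function with dom h ⊆ ℝⁿ₊, let x̄ ∈ dom h with ∂h(x̄) ≠ ∅, and let I = {i : x̄ᵢ ≠ 0}. Then the linear subspace S_I := {z ∈ ℝⁿ : z_I = 0} is contained in the parallel subspace par(∂h(x̄)) := aff(∂h(x̄)) − v for any v ∈ ∂h(x̄). -/

import Mathlib

open scoped RealInnerProductSpace

/-- Convex subdifferential of an extended-real-valued function. -/
noncomputable def ESub {n : ℕ} (g : EuclideanSpace ℝ (Fin n) → EReal)
    (x : EuclideanSpace ℝ (Fin n)) : Set (EuclideanSpace ℝ (Fin n)) :=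
  {v | ∀ z, g x + ((⟪v, z - x⟫ : ℝ) : EReal) ≤ g z}

def EProper {n : ℕ} (g : EuclideanSpace ℝ (Fin n) → EReal) : Prop :=
  (∃ x, g x ≠ ⊤) ∧ ∀ x, g x ≠ ⊥

/-- A function is polyhedral iff its epigraph is an intersection of finitely many
closed halfspaces of `ℝⁿ × ℝ`. -/
def IsPolyhedralFn {n : ℕ} (g : EuclideanSpace ℝ (Fin n) → EReal) : Prop :=
  ∃ (m : ℕ) (a : Fin m → EuclideanSpace ℝ (Fin n)) (r b : Fin m → ℝ),
    {p : EuclideanSpace ℝ (Fin n) × ℝ | g p.1 ≤ (p.2 : EReal)} =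
      {p : EuclideanSpace ℝ (Fin n) × ℝ | ∀ i, ⟪a i, p.1⟫ + r i * p.2 ≤ b i}

/-- for a proper polyhedral `h` with `dom h ⊆ ℝⁿ₊`, `x̄ ∈ dom h`,
`I = {i : x̄ᵢ ≠ 0}`, the subspace `S_I = {z : z_I = 0}` lies in the parallel subspace
of `∂h(x̄)`, i.e. `v + S_I ⊆ aff(∂h(x̄))` for every `v ∈ ∂h(x̄)`. -/
theorem stmt5 {n : ℕ} (h : EuclideanSpace ℝ (Fin n) → EReal)
    (hproper : EProper h) (hpoly : IsPolyhedralFn h)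
    (hdom : ∀ x, h x ≠ ⊤ → ∀ i, 0 ≤ x i)
    (xbar : EuclideanSpace ℝ (Fin n)) (hxbar : h xbar ≠ ⊤)
    (hne : (ESub h xbar).Nonempty)
    (v : EuclideanSpace ℝ (Fin n)) (hv : v ∈ ESub h xbar)
    (z : EuclideanSpace ℝ (Fin n)) (hz : ∀ i, xbar i ≠ 0 → z i = 0) :
    v + z ∈ (affineSpan ℝ (ESub h xbar) : Set (EuclideanSpace ℝ (Fin n))) := by
  -- key: for any w ≤ 0 vanishing on I, v + w ∈ ∂h(x̄)
  have key : ∀ w : EuclideanSpace ℝ (Fin n), (∀ i, xbar i ≠ 0 → w i = 0) →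
      (∀ i, w i ≤ 0) → v + w ∈ ESub h xbar := by
    intro w hwI hwle y
    by_cases hy : h y = ⊤
    · simp [hy]
    · have hy0 : ∀ i, 0 ≤ y i := hdom y hy
      have hinner : (⟪v + w, y - xbar⟫ : ℝ) ≤ ⟪v, y - xbar⟫ := by
        have : (⟪w, y - xbar⟫ : ℝ) ≤ 0 := by
          rw [PiLp.inner_apply]
          apply Finset.sum_nonpos
          intro i _
          by_cases hxi : xbar i = 0
          · have : w i * ((y - xbar) i) = w i * y i := by
              simp [PiLp.sub_apply, hxi]
            simp only [RCLike.inner_apply, conj_trivial]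
            rw [mul_comm, this]
            exact mul_nonpos_of_nonpos_of_nonneg (hwle i) (hy0 i)
          · simp [hwI i hxi]
        have := inner_add_left v w (y - xbar) (𝕜 := ℝ)
        rw [this]
        linarith
      calc h xbar + ((⟪v + w, y - xbar⟫ : ℝ) : EReal)
          ≤ h xbar + ((⟪v, y - xbar⟫ : ℝ) : EReal) := by
            apply add_le_add_right
            exact_mod_cast hinner
        _ ≤ h y := hv y
  -- decompose z
  set w₁ : EuclideanSpace ℝ (Fin n) := WithLp.toLp 2 (fun i => min (z i) 0) with hw₁
  set w₂ : EuclideanSpace ℝ (Fin n) := WithLp.toLp 2 (fun i => -(max (z i) 0)) with hw₂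
  have hA : v + w₁ ∈ ESub h xbar :=
    key w₁ (fun i hi => by simp [hw₁, hz i hi]) (fun i => min_le_right _ _)
  have hB : v + w₂ ∈ ESub h xbar :=
    key w₂ (fun i hi => by simp [hw₂, hz i hi]) (fun i => by
      simp only [hw₂]; exact neg_nonpos.mpr (le_max_right _ _))
  have hzeq : v + z = ((v + w₁) - (v + w₂)) + v := by
    ext i
    simp only [PiLp.add_apply, PiLp.sub_apply, hw₁, hw₂, PiLp.toLp_apply]
    have := min_add_max (z i) 0
    ring_nf
    linarith
  rw [hzeq]
  have hdir : (v + w₁) - (v + w₂) ∈ (affineSpan ℝ (ESub h xbar)).direction :=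
    AffineSubspace.vsub_mem_direction (subset_affineSpan ℝ _ hA)
      (subset_affineSpan ℝ _ hB)
  exact AffineSubspace.vadd_mem_of_mem_direction hdir (subset_affineSpan ℝ _ hv)
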